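/- Let K_1,...,K_j be convex bodies in R^n. Then R(K_1)² + ... + R(K_j)² ≤ R(K_1 + ... + K_j)², where R(K) denotes the Euclidean circumradius of K and + denotes Minkowski addition. -/

import Mathlib

open Metric Finset

/-- The Euclidean circumradius of a set `K`: the smallest `ρ ≥ 0` such that `K` is
contained in some closed ball of radius `ρ`. -/
noncomputable def circR {n : ℕ} (K : Set (EuclideanSpace ℝ (Fin n))) : ℝ :=
  sInf {ρ : ℝ | 0 ≤ ρ ∧ ∃ x, K ⊆ Metric.closedBall x ρ}

lemma circR_le {n : ℕ} {K : Set (EuclideanSpace ℝ (Fin n))} {ρ : ℝ} {x : EuclideanSpace ℝ (Fin n)}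
    (h0 : 0 ≤ ρ) (h : K ⊆ Metric.closedBall x ρ) : circR K ≤ ρ :=
  csInf_le ⟨0, fun _ ha => ha.1⟩ ⟨h0, x, h⟩

/-- attainment of the circumradius for compact nonempty sets -/
lemma exists_circumcenter {n : ℕ} {K : Set (EuclideanSpace ℝ (Fin n))}
    (hc : IsCompact K) (hne : K.Nonempty) :
    0 ≤ circR K ∧ ∃ c, K ⊆ Metric.closedBall c (circR K) := by
  obtain ⟨y0, hy0⟩ := hne
  set f : EuclideanSpace ℝ (Fin n) → ℝ := fun x => sSup ((dist x ·) '' K) with hf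
  have hbdd : ∀ x, BddAbove ((dist x ·) '' K) := by
    intro x
    obtain ⟨C, hC⟩ := hc.isBounded.subset_closedBall x
    exact ⟨C, by rintro _ ⟨y, hy, rfl⟩; simpa [dist_comm] using hC hy⟩
  have hfd : ∀ x, ∀ y ∈ K, dist x y ≤ f x := by
    intro x y hy
    exact le_csSup (hbdd x) ⟨y, hy, rfl⟩
  have hlip : LipschitzWith 1 f := by
    refine LipschitzWith.of_le_add fun x x' => ?_
    refine csSup_le ((Set.Nonempty.image _ ⟨y0, hy0⟩)) ?_
    rintro _ ⟨y, hy, rfl⟩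
    calc dist x y ≤ dist x x' + dist x' y := dist_triangle _ _ _
      _ ≤ dist x x' + f x' := by linarith [hfd x' y hy]
      _ = f x' + dist x x' := by ring
  have hcont : Continuous f := hlip.continuous
  obtain ⟨c, hcball, hcmin⟩ :=
    (isCompact_closedBall y0 (f y0)).exists_isMinOn
      ⟨y0, by simpa using hfd y0 y0 hy0⟩ hcont.continuousOn
  have hmin : ∀ x, f c ≤ f x := by
    intro x
    by_cases hx : x ∈ Metric.closedBall y0 (f y0)
    · exact hcmin hx
    · have h1 : f y0 < dist x y0 := by simpa [Metric.mem_closedBall, dist_comm] using hx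
      have h2 : f c ≤ f y0 := hcmin (Metric.mem_closedBall_self (by simpa using hfd y0 y0 hy0))
      have h3 : dist x y0 ≤ f x := hfd x y0 hy0
      linarith
  have hfc0 : 0 ≤ f c := le_trans dist_nonneg (hfd c y0 hy0)
  have hsub : K ⊆ Metric.closedBall c (f c) := fun y hy => by
    simpa [Metric.mem_closedBall, dist_comm] using hfd c y hy
  have heq : circR K = f c := by
    refine le_antisymm (circR_le hfc0 hsub) ?_
    refine le_csInf ⟨f c, hfc0, c, hsub⟩ ?_
    rintro ρ ⟨hρ0, x, hx⟩
    refine le_trans (hmin x) (csSup_le ((Set.Nonempty.image _ ⟨y0, hy0⟩)) ?_)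
    rintro _ ⟨y, hy, rfl⟩
    simpa [dist_comm] using hx hy
  exact ⟨heq ▸ hfc0, c, heq ▸ hsub⟩

/-- The Minkowski sum of a finite family of subsets of `ℝⁿ`. -/
def msum {n j : ℕ} (K : Fin j → Set (EuclideanSpace ℝ (Fin n))) :
    Set (EuclideanSpace ℝ (Fin n)) :=
  {x | ∃ f : Fin j → EuclideanSpace ℝ (Fin n), (∀ i, f i ∈ K i) ∧ x = ∑ i, f i}

/-- key lemma: any enclosing ball of radius ρ centered at x satisfies
    ρ² ≥ r² + dist(x,c)² where c is an optimal center. -/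
lemma key {n : ℕ} {K : Set (EuclideanSpace ℝ (Fin n))} (hne : K.Nonempty)
    {c x : EuclideanSpace ℝ (Fin n)} {ρ : ℝ}
    (hc : K ⊆ Metric.closedBall c (circR K)) (hx : K ⊆ Metric.closedBall x ρ) :
    circR K ^ 2 + dist x c ^ 2 ≤ ρ ^ 2 := by
  obtain ⟨y0, hy0⟩ := hne
  set r := circR K with hr
  have hr0 : 0 ≤ r := le_trans dist_nonneg (hc hy0)
  have hρ0 : 0 ≤ ρ := le_trans dist_nonneg (hx hy0)
  by_contra hcon
  push_neg at hcon
  set d := dist x c with hd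
  have hd0 : 0 ≤ d := dist_nonneg
  rcases eq_or_lt_of_le hd0 with hdz | hdpos
  · -- d = 0 : x = c, contradiction with minimality
    have hxc : x = c := by
      have := dist_eq_zero.mp hdz.symm
      exact this
    have : r ≤ ρ := circR_le hρ0 (hxc ▸ hx)
    nlinarith
  · set ε := r ^ 2 + d ^ 2 - ρ ^ 2 with hε
    have hεpos : 0 < ε := by simp only [hε]; linarith
    set t := min 1 (ε / (2 * d ^ 2)) with ht
    have htpos : 0 < t := lt_min one_pos (by positivity)
    have htle1 : t ≤ 1 := min_le_left _ _
    have htd : t * d ^ 2 ≤ ε / 2 := by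
      have h1 : t ≤ ε / (2 * d ^ 2) := min_le_right _ _
      have h2 : 0 < d ^ 2 := by positivity
      calc t * d ^ 2 ≤ (ε / (2 * d ^ 2)) * d ^ 2 := by nlinarith
        _ = ε / 2 := by field_simp
    set c' := c + t • (x - c) with hc'
    -- for every y in K, ‖y - c'‖² ≤ r² - t*ε/2
    have hkey : ∀ y ∈ K, ‖y - c'‖ ^ 2 ≤ r ^ 2 - t * ε / 2 := by
      intro y hy
      have hyc : ‖y - c‖ ≤ r := by simpa [dist_eq_norm] using hc hy
      have hyx : ‖y - x‖ ≤ ρ := by simpa [dist_eq_norm] using hx hy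
      have hdn : ‖x - c‖ = d := by rw [hd, dist_eq_norm]
      have hinner : ‖y - c‖ ^ 2 + d ^ 2 - ρ ^ 2 ≤ 2 * inner ℝ (y - c) (x - c) := by
        have hexp : ‖y - x‖ ^ 2 =
            ‖y - c‖ ^ 2 - 2 * inner ℝ (y - c) (x - c) + ‖x - c‖ ^ 2 := by
          have : y - x = (y - c) - (x - c) := by abel
          rw [this, @norm_sub_sq_real]
        have h2 : ‖y - x‖ ^ 2 ≤ ρ ^ 2 := by nlinarith [norm_nonneg (y - x)]
        rw [hdn] at hexp
        linarith [hexp ▸ h2]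
      have hexp2 : ‖y - c'‖ ^ 2 =
          ‖y - c‖ ^ 2 - 2 * t * inner ℝ (y - c) (x - c) + t ^ 2 * d ^ 2 := by
        have h1 : y - c' = (y - c) - t • (x - c) := by rw [hc']; abel
        rw [h1, @norm_sub_sq_real, real_inner_smul_right, norm_smul, hdn]
        simp [Real.norm_eq_abs, abs_of_pos htpos]
        ring
      have hyc2 : ‖y - c‖ ^ 2 ≤ r ^ 2 := by nlinarith [norm_nonneg (y - c)]
      nlinarith [mul_le_mul_of_nonneg_left hinner (le_of_lt htpos)]
    have hnn : 0 ≤ r ^ 2 - t * ε / 2 := le_trans (by positivity) (hkey y0 hy0)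
    set r' := Real.sqrt (r ^ 2 - t * ε / 2) with hr'
    have hr'0 : 0 ≤ r' := Real.sqrt_nonneg _
    have hsub : K ⊆ Metric.closedBall c' r' := by
      intro y hy
      rw [Metric.mem_closedBall, dist_eq_norm, hr']
      rw [show (‖y - c'‖ ≤ Real.sqrt (r ^ 2 - t * ε / 2)) ↔ _ from
        Real.le_sqrt (norm_nonneg _) hnn]
      exact hkey y hy
    have hle : r ≤ r' := circR_le hr'0 hsub
    have : r' ^ 2 = r ^ 2 - t * ε / 2 := Real.sq_sqrt hnn
    nlinarith

lemma msum_nonempty {n j : ℕ} {K : Fin j → Set (EuclideanSpace ℝ (Fin n))}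
    (hne : ∀ i, (K i).Nonempty) : (msum K).Nonempty := by
  choose f hf using hne
  exact ⟨∑ i, f i, f, hf, rfl⟩

lemma main_ind {n : ℕ} : ∀ (j : ℕ) (K : Fin j → Set (EuclideanSpace ℝ (Fin n))),
    (∀ i, IsCompact (K i)) → (∀ i, (K i).Nonempty) →
    ∀ (x : EuclideanSpace ℝ (Fin n)) (ρ : ℝ), msum K ⊆ Metric.closedBall x ρ →
    ∑ i, circR (K i) ^ 2 ≤ ρ ^ 2 := by
  intro j
  induction j with
  | zero => intro K _ _ x ρ _; simpa using sq_nonneg ρ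
  | succ j ih =>
    intro K hcpt hne x ρ hsub
    obtain ⟨hr0, c, hc⟩ := exists_circumcenter (hcpt 0) (hne 0)
    set r := circR (K 0) with hr
    set T : Fin j → Set (EuclideanSpace ℝ (Fin n)) := fun i => K i.succ with hT
    -- every point s of msum T satisfies dist s (x - c) ² ≤ ρ² - r²
    have hclaim : ∀ s ∈ msum T, dist s (x - c) ^ 2 ≤ ρ ^ 2 - r ^ 2 := by
      rintro s ⟨f, hf, rfl⟩
      have hK0 : K 0 ⊆ Metric.closedBall (x - ∑ i, f i) ρ := by
        intro a ha
        have hmem : a + ∑ i, f i ∈ msum K := by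
          refine ⟨Fin.cons a f, ?_, ?_⟩
          · intro i
            refine Fin.cases ?_ ?_ i
            · simpa using ha
            · intro k; simpa using hf k
          · rw [Fin.sum_cons]
        have := hsub hmem
        rw [Metric.mem_closedBall, dist_eq_norm] at this ⊢
        convert this using 2
        abel
      have := key (hne 0) hc hK0
      have hdd : dist (x - ∑ i, f i) c = dist (∑ i, f i) (x - c) := by
        rw [dist_eq_norm, dist_eq_norm, ← norm_neg]
        congr 1
        abel
      rw [hdd] at this
      linarith
    obtain ⟨s0, hs0⟩ := msum_nonempty (K := T) (fun i => hne i.succ)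
    have hnn : 0 ≤ ρ ^ 2 - r ^ 2 := le_trans (sq_nonneg _) (hclaim s0 hs0)
    have hsubT : msum T ⊆ Metric.closedBall (x - c) (Real.sqrt (ρ ^ 2 - r ^ 2)) := by
      intro s hs
      rw [Metric.mem_closedBall, Real.le_sqrt dist_nonneg hnn]
      exact hclaim s hs
    have hihT := ih T (fun i => hcpt i.succ) (fun i => hne i.succ) _ _ hsubT
    rw [Real.sq_sqrt hnn] at hihT
    simp only [hT] at hihT
    rw [Fin.sum_univ_succ]
    linarith

theorem sq_circumradius_superadditive {n j : ℕ}
    (K : Fin j → Set (EuclideanSpace ℝ (Fin n)))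
    (hconv : ∀ i, Convex ℝ (K i)) (hcpt : ∀ i, IsCompact (K i))
    (hne : ∀ i, (K i).Nonempty) :
    ∑ i, circR (K i) ^ 2 ≤ circR (msum K) ^ 2 := by
  -- the infimum defining circR (msum K) ranges over a nonempty set
  have hcc := fun i => exists_circumcenter (hcpt i) (hne i)
  choose hr0 c hc using hcc
  have hball : msum K ⊆ Metric.closedBall (∑ i, c i) (∑ i, circR (K i)) := by
    rintro y ⟨f, hf, rfl⟩
    rw [Metric.mem_closedBall, dist_eq_norm]
    have h1 : (∑ i, f i) - ∑ i, c i = ∑ i, (f i - c i) := by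
      rw [Finset.sum_sub_distrib]
    rw [h1]
    refine le_trans (norm_sum_le _ _) (Finset.sum_le_sum fun i _ => ?_)
    simpa [dist_eq_norm] using hc i (hf i)
  have hsetne : {ρ : ℝ | 0 ≤ ρ ∧ ∃ x, msum K ⊆ Metric.closedBall x ρ}.Nonempty :=
    ⟨∑ i, circR (K i), Finset.sum_nonneg fun i _ => hr0 i, _, hball⟩
  set s := ∑ i, circR (K i) ^ 2 with hs
  have hs0 : 0 ≤ s := Finset.sum_nonneg fun i _ => sq_nonneg _
  have hsqrt : Real.sqrt s ≤ circR (msum K) := by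
    refine le_csInf hsetne ?_
    rintro ρ ⟨hρ0, x, hx⟩
    have := main_ind j K hcpt hne x ρ hx
    rw [show s = s from rfl]
    calc Real.sqrt s ≤ Real.sqrt (ρ ^ 2) := Real.sqrt_le_sqrt this
      _ = ρ := by rw [Real.sqrt_sq hρ0]
  calc s = Real.sqrt s ^ 2 := (Real.sq_sqrt hs0).symm
    _ ≤ circR (msum K) ^ 2 := by
        have h0 : 0 ≤ Real.sqrt s := Real.sqrt_nonneg _
        exact pow_le_pow_left₀ h0 hsqrt 2
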